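/- Sorted ℓ₁-norm dominates the scaled ℓ₁-norm: let λ₁ ≥ λ₂ ≥ … ≥ λ_p > 0 and let J_λ be the sorted ℓ₁-norm. Then for every β ∈ ℝ^p and every S ⊆ {1,…,p} with |S| = s and r = p − s: J_λ(β) ≥ Ω̲(β) ≥ λ_p·‖β‖₁, where Ω̲(β) = Σ_{j=1}^s λ_j·|β_S|_{(j)} + Σ_{l=1}^r λ_{p−r+l}·|β_{S^c}|_{(l)}. -/

import Mathlib

open Finset

/-- `restr S b` is the vector `b_S`: coordinates in `S` kept, others set to `0`. -/
def restr {p : ℕ} (S : Finset (Fin p)) (b : Fin p → ℝ) : Fin p → ℝ :=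
  fun j => if j ∈ S then b j else 0

/-- `sortedAbs b j` is the `(j+1)`-st largest absolute value `|b|_{(j+1)}` among the entries
of `b` (the decreasing rearrangement of the absolute values of the entries of `b`). -/
noncomputable def sortedAbs {p : ℕ} (b : Fin p → ℝ) : Fin p → ℝ :=
  fun j => |b (Tuple.sort (fun i => -|b i|) j)|

lemma sortedAbs_nonneg {p : ℕ} (b : Fin p → ℝ) (j : Fin p) : 0 ≤ sortedAbs b j :=
  abs_nonneg _

lemma sortedAbs_antitone {p : ℕ} (b : Fin p → ℝ) : Antitone (sortedAbs b) := by
  intro i j hij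
  have h := Tuple.monotone_sort (fun i => -|b i|) hij
  simpa [sortedAbs] using neg_le_neg_iff.mp h

lemma map_val_comp_perm {n : ℕ} {α : Type*} (σ : Equiv.Perm (Fin n)) (f : Fin n → α) :
    (Finset.univ : Finset (Fin n)).val.map (fun j => f (σ j)) = Finset.univ.val.map f := by
  have h : (Finset.univ : Finset (Fin n)).val.map (fun j => f (σ j))
      = ((Finset.univ : Finset (Fin n)).map σ.toEmbedding).val.map f := by
    rw [Finset.map_val, Multiset.map_map]
    rfl
  rw [h, Finset.map_univ_equiv]

lemma map_val_sortedAbs {p : ℕ} (b : Fin p → ℝ) :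
    (Finset.univ : Finset (Fin p)).val.map (sortedAbs b)
      = Finset.univ.val.map (fun j => |b j|) :=
  map_val_comp_perm (Tuple.sort (fun i => -|b i|)) (fun j => |b j|)

lemma sum_sortedAbs {p : ℕ} (b : Fin p → ℝ) : ∑ j, sortedAbs b j = ∑ j, |b j| :=
  Equiv.sum_comp (Tuple.sort (fun i => -|b i|)) (fun j => |b j|)

lemma card_filter_lt {p m : ℕ} (h : m ≤ p) :
    ((Finset.univ : Finset (Fin p)).filter (fun j : Fin p => (j : ℕ) < m)).card = m := by
  have he : ((Finset.univ : Finset (Fin p)).filter (fun j : Fin p => (j : ℕ) < m))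
      = (Finset.univ : Finset (Fin m)).map ⟨Fin.castLE h, Fin.castLE_injective h⟩ := by
    ext j
    simp only [Finset.mem_filter, Finset.mem_univ, true_and, Finset.mem_map,
      Function.Embedding.coeFn_mk]
    constructor
    · intro hj; exact ⟨⟨(j : ℕ), hj⟩, by ext; rfl⟩
    · rintro ⟨i, rfl⟩; exact i.isLt
  rw [he, Finset.card_map, Finset.card_univ, Fintype.card_fin]

lemma sortedAbs_restr_eq_zero {p : ℕ} (S : Finset (Fin p)) (b : Fin p → ℝ) {j : Fin p}
    (hj : S.card ≤ (j : ℕ)) : sortedAbs (restr S b) j = 0 := by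
  by_contra hne
  have hpos : 0 < sortedAbs (restr S b) j :=
    lt_of_le_of_ne (sortedAbs_nonneg _ _) (Ne.symm hne)
  have key : ∀ i : Fin p, i ≤ j → Tuple.sort (fun i => -|restr S b i|) i ∈ S := by
    intro i hij
    by_contra hns
    have h2 : 0 < |restr S b ((Tuple.sort fun i => -|restr S b i|) i)| :=
      hpos.trans_le (sortedAbs_antitone (restr S b) hij)
    have h3 : restr S b ((Tuple.sort fun i => -|restr S b i|) i) = 0 := by
      simp only [restr] at hns ⊢
      exact if_neg hns
    rw [h3] at h2
    simp at h2
  have hsub : (Finset.Iic j).image (Tuple.sort (fun i => -|restr S b i|)) ⊆ S := by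
    intro x hx
    obtain ⟨i, hi, rfl⟩ := Finset.mem_image.mp hx
    exact key i (Finset.mem_Iic.mp hi)
  have h3 : (Finset.Iic j).card ≤ S.card := by
    have h4 : ((Finset.Iic j).image (Tuple.sort fun i => -|restr S b i|)).card ≤ S.card :=
      Finset.card_le_card hsub
    rwa [Finset.card_image_of_injective _ (Equiv.injective _)] at h4
  rw [Fin.card_Iic] at h3
  omega

lemma univ_val_eq_add_compl {p : ℕ} (T : Finset (Fin p)) :
    (Finset.univ : Finset (Fin p)).val = T.val + Tᶜ.val := by
  have h : (Finset.univ : Finset (Fin p)) = T.disjUnion Tᶜ disjoint_compl_right := by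
    rw [Finset.disjUnion_eq_union, Finset.union_compl]
  rw [h]
  rfl

lemma map_val_restr {p : ℕ} (T : Finset (Fin p)) (β : Fin p → ℝ) :
    (Finset.univ : Finset (Fin p)).val.map (fun j => |restr T β j|)
      = T.val.map (fun j => |β j|) + Multiset.replicate Tᶜ.card 0 := by
  rw [univ_val_eq_add_compl T, Multiset.map_add]
  congr 1
  · refine Multiset.map_congr rfl fun j hj => ?_
    have hjT : j ∈ T := Finset.mem_val.mp hj
    have hres : restr T β j = β j := if_pos hjT
    show |restr T β j| = |β j|
    rw [hres]
  · rw [Multiset.eq_replicate]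
    refine ⟨by rw [Multiset.card_map, Finset.card_val], fun x hx => ?_⟩
    obtain ⟨j, hj, rfl⟩ := Multiset.mem_map.mp hx
    have hjn : j ∉ T := Finset.mem_compl.mp (Finset.mem_val.mp hj)
    have hres : restr T β j = 0 := if_neg hjn
    show |restr T β j| = 0
    rw [hres, abs_zero]

lemma map_val_filter_lt_sortedAbs {p : ℕ} (T : Finset (Fin p)) (β : Fin p → ℝ) :
    ((Finset.univ : Finset (Fin p)).filter (fun j : Fin p => (j : ℕ) < T.card)).val.map
        (sortedAbs (restr T β))
      = T.val.map (fun j => |β j|) := by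
  classical
  have hT : T.card ≤ p := le_trans (Finset.card_le_univ T) (by simp)
  have hsplit : (Finset.univ : Finset (Fin p)).val.map (sortedAbs (restr T β))
      = ((Finset.univ.filter (fun j : Fin p => (j : ℕ) < T.card)).val.map
          (sortedAbs (restr T β)))
        + Multiset.replicate (p - T.card) 0 := by
    have hu : (Finset.univ : Finset (Fin p)).val
        = (Finset.univ.filter (fun j : Fin p => (j : ℕ) < T.card)).val
          + (Finset.univ.filter (fun j : Fin p => ¬ (j : ℕ) < T.card)).val := by
      rw [Finset.filter_val, Finset.filter_val, Multiset.filter_add_not]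
    rw [hu, Multiset.map_add]
    congr 1
    rw [Multiset.eq_replicate]
    constructor
    · have hc := Finset.card_filter_add_card_filter_not
        (s := (Finset.univ : Finset (Fin p))) (p := fun j : Fin p => (j : ℕ) < T.card)
      rw [card_filter_lt hT, Finset.card_univ, Fintype.card_fin] at hc
      rw [Multiset.card_map, Finset.card_val]
      omega
    · intro x hx
      obtain ⟨j, hj, rfl⟩ := Multiset.mem_map.mp hx
      have hj' : T.card ≤ (j : ℕ) := by
        have := (Finset.mem_filter.mp (Finset.mem_val.mp hj)).2
        omega
      exact sortedAbs_restr_eq_zero T β hj'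
  have hsplit2 : (Finset.univ : Finset (Fin p)).val.map (sortedAbs (restr T β))
      = T.val.map (fun j => |β j|) + Multiset.replicate (p - T.card) 0 := by
    rw [map_val_sortedAbs, map_val_restr]
    congr 2
    rw [Finset.card_compl, Fintype.card_fin]
  exact add_right_cancel (hsplit.symm.trans hsplit2)

/-- If two tuples have the same multiset of values, one is a permutation of the other. -/
lemma exists_comp_perm {n : ℕ} {f g : Fin n → ℝ}
    (h : (Finset.univ : Finset (Fin n)).val.map f = Finset.univ.val.map g) :
    ∃ σ : Equiv.Perm (Fin n), f = g ∘ σ := by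
  have hperm : (List.ofFn f).Perm (List.ofFn g) := by
    rw [Fin.univ_val_map, Fin.univ_val_map] at h
    exact Multiset.coe_eq_coe.mp h
  have h1 : f ∘ Tuple.sort f = g ∘ Tuple.sort g := by
    have hp2 : (List.ofFn (f ∘ Tuple.sort f)).Perm (List.ofFn (g ∘ Tuple.sort g)) :=
      ((Tuple.sort f).ofFn_comp_perm f).trans
        (hperm.trans ((Tuple.sort g).ofFn_comp_perm g).symm)
    exact List.ofFn_injective (List.Perm.eq_of_sortedLE
      (Tuple.monotone_sort f).sortedLE_ofFn (Tuple.monotone_sort g).sortedLE_ofFn hp2)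
  refine ⟨(Tuple.sort f).symm.trans (Tuple.sort g), funext fun y => ?_⟩
  have h2 := congrFun h1 ((Tuple.sort f).symm y)
  simpa using h2

/-- **Sorted ℓ₁-norm dominates the scaled ℓ₁-norm** (Lemma 11).
With weights `λ₁ ≥ … ≥ λ_p > 0` (here `lam k` is `λ_{k+1}`), for every `β` and every `S` with
`|S| = s`, `r = p − s`: `J_λ(β) ≥ Ω̲(β) ≥ λ_p ‖β‖₁`, where
`Ω̲(β) = ∑_{j=1}^s λ_j |β_S|_{(j)} + ∑_{l=1}^r λ_{p−r+l} |β_{Sᶜ}|_{(l)}`. -/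
theorem sorted_l1_dominates_l1 {p : ℕ} (lam : ℕ → ℝ)
    (hmono : ∀ i j : ℕ, i ≤ j → j < p → lam j ≤ lam i)
    (hpos : ∀ j : ℕ, j < p → 0 < lam j)
    (β : Fin p → ℝ) (S : Finset (Fin p)) :
    ((∑ j : Fin p, if (j : ℕ) < S.card then lam (j : ℕ) * sortedAbs (restr S β) j else 0)
        + (∑ j : Fin p, if (j : ℕ) < p - S.card
            then lam (S.card + (j : ℕ)) * sortedAbs (restr Sᶜ β) j else 0)
      ≤ ∑ j : Fin p, lam (j : ℕ) * sortedAbs β j)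
    ∧ lam (p - 1) * ∑ j : Fin p, |β j|
      ≤ (∑ j : Fin p, if (j : ℕ) < S.card then lam (j : ℕ) * sortedAbs (restr S β) j else 0)
        + (∑ j : Fin p, if (j : ℕ) < p - S.card
            then lam (S.card + (j : ℕ)) * sortedAbs (restr Sᶜ β) j else 0) := by
  classical
  set s := S.card with hsdef
  have hsp : s ≤ p := le_trans (Finset.card_le_univ S) (by simp)
  have hcompl : Sᶜ.card = p - s := by rw [Finset.card_compl, Fintype.card_fin]
  set a := sortedAbs (restr S β) with ha
  set c := sortedAbs (restr Sᶜ β) with hc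
  set g := sortedAbs β with hg
  have hsub_lt : ∀ j : Fin p, (j : ℕ) - s < p := fun j => lt_of_le_of_lt (Nat.sub_le _ _) j.isLt
  set e : Fin p → Fin p := fun j => ⟨(j : ℕ) - s, hsub_lt j⟩ with he
  set v : Fin p → ℝ := fun j => if (j : ℕ) < s then a j else c (e j) with hv
  set A := Finset.univ.filter (fun j : Fin p => (j : ℕ) < s) with hA
  set B := Finset.univ.filter (fun j : Fin p => ¬ (j : ℕ) < s) with hB
  set C := Finset.univ.filter (fun j : Fin p => (j : ℕ) < p - s) with hC
  -- the zero lemmas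
  have haB : ∀ j ∈ B, a j = 0 := by
    intro j hj
    have h1 : ¬ (j : ℕ) < s := (Finset.mem_filter.mp hj).2
    exact sortedAbs_restr_eq_zero S β (by omega)
  have hcz : ∀ j : Fin p, p - s ≤ (j : ℕ) → c j = 0 := by
    intro j hj
    exact sortedAbs_restr_eq_zero Sᶜ β (by omega)
  -- the image fact: e maps B bijectively to C
  have hinj : Set.InjOn e B := by
    intro x hx y hy hxy
    have hx' : ¬ (x : ℕ) < s := (Finset.mem_filter.mp hx).2
    have hy' : ¬ (y : ℕ) < s := (Finset.mem_filter.mp hy).2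
    have : (x : ℕ) - s = (y : ℕ) - s := congrArg Fin.val hxy
    exact Fin.ext (by omega)
  have himg : B.image e = C := by
    ext x
    simp only [Finset.mem_image, hB, hC, Finset.mem_filter, Finset.mem_univ, true_and]
    constructor
    · rintro ⟨j, hj, rfl⟩
      have hj' : ¬ (j : ℕ) < s := hj
      show (j : ℕ) - s < p - s
      have := j.isLt
      omega
    · intro hx
      have hxs : (x : ℕ) + s < p := by omega
      refine ⟨⟨(x : ℕ) + s, hxs⟩, ?_, ?_⟩
      · show ¬ ((x : ℕ) + s < s)
        omega
      · rw [he]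
        apply Fin.ext
        show (x : ℕ) + s - s = (x : ℕ)
        omega
  -- multiset identities
  have hAa : A.val.map a = S.val.map (fun j => |β j|) := map_val_filter_lt_sortedAbs S β
  have hCc : C.val.map c = Sᶜ.val.map (fun j => |β j|) := by
    have h1 := map_val_filter_lt_sortedAbs Sᶜ β
    simp only [hcompl] at h1
    exact h1
  have hBC : B.val.map (fun j => c (e j)) = C.val.map c := by
    have h1 : B.val.map (fun j => c (e j)) = (B.val.map e).map c := by
      rw [Multiset.map_map]; rfl
    rw [h1, ← Finset.image_val_of_injOn hinj, himg]
  have hvmap : (Finset.univ : Finset (Fin p)).val.map v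
      = Finset.univ.val.map (fun j => |β j|) := by
    have hu : (Finset.univ : Finset (Fin p)).val = A.val + B.val := by
      rw [hA, hB, Finset.filter_val, Finset.filter_val, Multiset.filter_add_not]
    have h2 : A.val.map v = A.val.map a :=
      Multiset.map_congr rfl fun j hj => by
        have hjs : (j : ℕ) < s := (Finset.mem_filter.mp (Finset.mem_val.mp hj)).2
        show v j = a j
        rw [hv]
        exact if_pos hjs
    have h3 : B.val.map v = B.val.map (fun j => c (e j)) :=
      Multiset.map_congr rfl fun j hj => by
        have hjs : ¬ (j : ℕ) < s := (Finset.mem_filter.mp (Finset.mem_val.mp hj)).2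
        show v j = c (e j)
        rw [hv]
        exact if_neg hjs
    have hfinal : Multiset.map v (A.val + B.val)
        = Multiset.map (fun j => |β j|) ((Finset.univ : Finset (Fin p)).val) := by
      rw [Multiset.map_add, h2, h3, hAa, hBC, hCc, ← Multiset.map_add,
        ← univ_val_eq_add_compl]
    conv_lhs => rw [hu]
    exact hfinal
  obtain ⟨σ, hσ⟩ := exists_comp_perm (hvmap.trans (map_val_sortedAbs β).symm)
  -- sum identities
  have hSum1 : (∑ j : Fin p, if (j : ℕ) < s then lam (j : ℕ) * a j else 0)
      = ∑ j ∈ A, lam (j : ℕ) * v j := by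
    rw [hA, Finset.sum_filter]
    refine Finset.sum_congr rfl fun j _ => ?_
    by_cases hj : (j : ℕ) < s <;> simp [hj, hv]
  have hSum2 : (∑ j : Fin p, if (j : ℕ) < p - s then lam (s + (j : ℕ)) * c j else 0)
      = ∑ j ∈ B, lam (j : ℕ) * v j := by
    rw [← Finset.sum_filter, ← hC, ← himg, Finset.sum_image (fun x hx y hy => hinj hx hy)]
    refine Finset.sum_congr rfl fun j hj => ?_
    have hjs : ¬ (j : ℕ) < s := (Finset.mem_filter.mp hj).2
    have h1 : s + ((e j : Fin p) : ℕ) = (j : ℕ) := by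
      show s + ((j : ℕ) - s) = (j : ℕ); omega
    rw [h1]
    simp [hv, hjs]
  have hmain : (∑ j : Fin p, if (j : ℕ) < s then lam (j : ℕ) * a j else 0)
      + (∑ j : Fin p, if (j : ℕ) < p - s then lam (s + (j : ℕ)) * c j else 0)
      = ∑ j : Fin p, lam (j : ℕ) * v j := by
    rw [hSum1, hSum2, hA, hB]
    exact Finset.sum_filter_add_sum_filter_not _ _ _
  constructor
  · -- Part 1: rearrangement inequality
    rw [hmain]
    have hmv : Monovary (fun j : Fin p => lam (j : ℕ)) g := by
      intro i j hgij
      have hji : (j : Fin p) < i := by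
        by_contra hcon
        push_neg at hcon
        exact absurd (sortedAbs_antitone β hcon) (not_le.mpr hgij)
      exact hmono (j : ℕ) (i : ℕ) (le_of_lt hji) i.isLt
    have hre : ∑ j : Fin p, lam (j : ℕ) * g (σ j) ≤ ∑ j : Fin p, lam (j : ℕ) * g j :=
      hmv.sum_mul_comp_perm_le_sum_mul
    have hveq : ∀ j, v j = g (σ j) := fun j => congrFun hσ j
    calc ∑ j : Fin p, lam (j : ℕ) * v j = ∑ j : Fin p, lam (j : ℕ) * g (σ j) := by
          exact Finset.sum_congr rfl fun j _ => by rw [hveq]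
      _ ≤ ∑ j : Fin p, lam (j : ℕ) * g j := hre
  · -- Part 2
    rcases Nat.eq_zero_or_pos p with hp0 | hp0
    · subst hp0
      simp
    have hlamge : ∀ k : ℕ, k < p → lam (p - 1) ≤ lam k := fun k hk =>
      hmono k (p - 1) (by omega) (by omega)
    -- sums of a and c
    have hsa : ∑ j : Fin p, (if (j : ℕ) < s then a j else 0) = ∑ j ∈ S, |β j| := by
      have h1 : ∑ j : Fin p, (if (j : ℕ) < s then a j else 0) = ∑ j : Fin p, a j := by
        refine Finset.sum_congr rfl fun j _ => ?_
        by_cases hj : (j : ℕ) < s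
        · rw [if_pos hj]
        · rw [if_neg hj]
          exact (sortedAbs_restr_eq_zero S β (show S.card ≤ (j : ℕ) by omega)).symm
      rw [h1, ha, sum_sortedAbs]
      rw [← Finset.sum_add_sum_compl S (fun j => |restr S β j|)]
      have h2 : ∑ j ∈ Sᶜ, |restr S β j| = 0 := by
        refine Finset.sum_eq_zero fun j hj => ?_
        have hjn : j ∉ S := Finset.mem_compl.mp hj
        have hres : restr S β j = 0 := if_neg hjn
        show |restr S β j| = 0
        rw [hres, abs_zero]
      rw [h2, add_zero]
      refine Finset.sum_congr rfl fun j hj => ?_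
      have hres : restr S β j = β j := if_pos hj
      show |restr S β j| = |β j|
      rw [hres]
    have hsc : ∑ j : Fin p, (if (j : ℕ) < p - s then c j else 0) = ∑ j ∈ Sᶜ, |β j| := by
      have h1 : ∑ j : Fin p, (if (j : ℕ) < p - s then c j else 0) = ∑ j : Fin p, c j := by
        refine Finset.sum_congr rfl fun j _ => ?_
        by_cases hj : (j : ℕ) < p - s
        · rw [if_pos hj]
        · rw [if_neg hj]
          exact (hcz j (by omega)).symm
      rw [h1, hc, sum_sortedAbs]
      rw [← Finset.sum_add_sum_compl Sᶜ (fun j => |restr Sᶜ β j|)]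
      have h2 : ∑ j ∈ Sᶜᶜ, |restr Sᶜ β j| = 0 := by
        refine Finset.sum_eq_zero fun j hj => ?_
        have hjS : j ∈ S := by rwa [compl_compl] at hj
        have hjn : j ∉ Sᶜ := by simp [Finset.mem_compl, hjS]
        have hres : restr Sᶜ β j = 0 := if_neg hjn
        show |restr Sᶜ β j| = 0
        rw [hres, abs_zero]
      rw [h2, add_zero]
      refine Finset.sum_congr rfl fun j hj => ?_
      have hres : restr Sᶜ β j = β j := if_pos hj
      show |restr Sᶜ β j| = |β j|
      rw [hres]
    have hb1 : lam (p - 1) * ∑ j ∈ S, |β j|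
        ≤ ∑ j : Fin p, if (j : ℕ) < s then lam (j : ℕ) * a j else 0 := by
      rw [← hsa, Finset.mul_sum]
      refine Finset.sum_le_sum fun j _ => ?_
      by_cases hj : (j : ℕ) < s
      · simp only [hj, if_true]
        exact mul_le_mul_of_nonneg_right (hlamge (j : ℕ) j.isLt) (sortedAbs_nonneg _ _)
      · simp [hj]
    have hb2 : lam (p - 1) * ∑ j ∈ Sᶜ, |β j|
        ≤ ∑ j : Fin p, if (j : ℕ) < p - s then lam (s + (j : ℕ)) * c j else 0 := by
      rw [← hsc, Finset.mul_sum]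
      refine Finset.sum_le_sum fun j _ => ?_
      by_cases hj : (j : ℕ) < p - s
      · simp only [hj, if_true]
        exact mul_le_mul_of_nonneg_right (hlamge (s + (j : ℕ)) (by omega)) (sortedAbs_nonneg _ _)
      · simp [hj]
    calc lam (p - 1) * ∑ j : Fin p, |β j|
        = lam (p - 1) * ∑ j ∈ S, |β j| + lam (p - 1) * ∑ j ∈ Sᶜ, |β j| := by
          rw [← mul_add, Finset.sum_add_sum_compl]
      _ ≤ _ := add_le_add hb1 hb2
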